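/- Let I be a set with |I| ≤ ℵ₀ and for each i ∈ I let 𝒜_i be a coreflective class of topological spaces. If SCH({C(ω)}) ⊆ CH(⋃_{i∈I} 𝒜_i), then there exists i₀ ∈ I such that SCH({C(ω)}) ⊆ 𝒜_{i₀}. (Here SCH({C(ω)}) is the class of subsequential spaces, i.e., subspaces of sequential spaces.) -/

import Mathlib

universe u v

/-- A class of topological spaces (in universe `u`): a predicate on spaces. -/
abbrev TopClass : Type (u + 1) := (X : Type u) → TopologicalSpace X → Prop

/-- A class of topological spaces is coreflective if it is closed under the formation of
topological sums and quotient spaces. -/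
def IsCoreflective (C : TopClass.{u}) : Prop :=
  (∀ (ι : Type u) (X : ι → Type u) (t : (i : ι) → TopologicalSpace (X i)),
      (∀ i, C (X i) (t i)) → C ((i : ι) × X i) (@instTopologicalSpaceSigma ι X t)) ∧
  (∀ (X Y : Type u) (tX : TopologicalSpace X) (tY : TopologicalSpace Y) (f : X → Y),
      @Topology.IsQuotientMap X Y tX tY f → C X tX → C Y tY)

/-- The coreflective hull of a class of spaces: the smallest coreflective class containing it. -/
def CH (A : TopClass.{u}) : TopClass.{u} :=
  fun X tX => ∀ C : TopClass.{u}, IsCoreflective C → (∀ Y tY, A Y tY → C Y tY) → C X tX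

/-- `SCH A` is the class of all subspaces of members of `CH A`. -/
def SCH (A : TopClass.{u}) : TopClass.{u} :=
  fun X tX => ∃ (Y : Type u) (tY : TopologicalSpace Y) (f : X → Y),
    CH A Y tY ∧ @Topology.IsEmbedding X Y tX tY f

/-- The class consisting of (the spaces homeomorphic to) a single space `A`. -/
def singleClass (A : Type u) (tA : TopologicalSpace A) : TopClass.{u} :=
  fun Y tY => Nonempty (@Homeomorph Y A tY tA)

/-- A class of topological spaces is hereditary if it is closed under subspaces. -/
def IsHereditary (C : TopClass.{u}) : Prop :=
  ∀ (X : Type u) (tX : TopologicalSpace X), C X tX →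
    ∀ (Z : Type u) (tZ : TopologicalSpace Z) (f : Z → X), @Topology.IsEmbedding Z X tZ tX f →
      C Z tZ

/-- The class `FG` of finitely generated (Alexandrov-discrete) topological spaces. -/
def FGClass : TopClass.{u} := fun X tX => @AlexandrovDiscrete X tX

/-- A filter space: a topological space with precisely one accumulation (non-isolated) point,
namely `a`. -/
def IsFilterSpace (X : Type u) [TopologicalSpace X] (a : X) : Prop :=
  ¬ IsOpen ({a} : Set X) ∧ ∀ x : X, x ≠ a → IsOpen ({x} : Set X)

/-- A filter subspace of a filter space `A` with accumulation point `a`: a subset containing `a`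
such that `a` is in the closure of `B \ {a}`. -/
def IsFilterSubspace (A : Type u) [TopologicalSpace A] (a : A) (B : Set A) : Prop :=
  a ∈ B ∧ a ∈ closure (B \ {a})

/-- `CIdx K m` represents the set `αⁿ` for `n = m+1`, where `K` plays the role of `α`. -/
def CIdx (K : Type u) : ℕ → Type u
  | 0 => K
  | m + 1 => K × CIdx K m

/-- Given a subset `U` of `(α × αⁿ) ∪ {∞}` and `ξ`, the set `{x ∈ αⁿ : (ξ,x) ∈ U} ∪ {∞}`. -/
def cslice {K J : Type u} (U : Set (Option (K × J))) (ξ : K) : Set (Option J) :=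
  insert none (Option.some '' {x : J | Option.some (ξ, x) ∈ U})

/-- The openness predicate of the space `C⁻(α, m+1)`. -/
def CIsOpen (K : Type u) : (m : ℕ) → Set (Option (CIdx K m)) → Prop
  | 0, U => none ∈ U → Cardinal.mk ((Option.some ⁻¹' U)ᶜ : Set K) < Cardinal.mk K
  | m + 1, U => none ∈ U →
      Cardinal.mk (({ξ : K | CIsOpen K m (cslice U ξ)}ᶜ : Set K)) < Cardinal.mk K

theorem cslice_mono {K J : Type u} {U V : Set (Option (K × J))} (h : U ⊆ V) (ξ : K) :
    cslice U ξ ⊆ cslice V ξ := by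
  intro z hz
  rcases hz with hz | hz
  · exact Or.inl hz
  · rcases hz with ⟨x, hx, rfl⟩
    exact Or.inr ⟨x, h hx, rfl⟩

theorem none_mem_cslice {K J : Type u} (U : Set (Option (K × J))) (ξ : K) :
    none ∈ cslice U ξ := Set.mem_insert _ _

theorem cisOpen_of_none_not_mem (K : Type u) (m : ℕ) (U : Set (Option (CIdx K m)))
    (h : none ∉ U) : CIsOpen K m U := by
  cases m with
  | zero => exact fun hU => absurd hU h
  | succ m => exact fun hU => absurd hU h

theorem cisOpen_mono (K : Type u) (m : ℕ) :
    ∀ U V : Set (Option (CIdx K m)), CIsOpen K m U → U ⊆ V → (none ∈ V → none ∈ U) →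
      CIsOpen K m V := by
  induction m with
  | zero =>
    intro U V hU hUV hnone hV
    refine lt_of_le_of_lt (Cardinal.mk_le_mk_of_subset ?_) (hU (hnone hV))
    intro k hk hU'
    exact hk (hUV hU')
  | succ m ih =>
    intro U V hU hUV hnone hV
    refine lt_of_le_of_lt (Cardinal.mk_le_mk_of_subset ?_) (hU (hnone hV))
    intro ξ hξ hopen
    exact hξ (ih _ _ hopen (cslice_mono hUV ξ) (fun _ => none_mem_cslice U ξ))

theorem cslice_univ {K J : Type u} (ξ : K) :
    cslice (Set.univ : Set (Option (K × J))) ξ = Set.univ := by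
  ext z
  cases z with
  | none => simp [cslice]
  | some j => simp [cslice]

theorem cisOpen_univ (K : Type u) [Nonempty K] (m : ℕ) : CIsOpen K m Set.univ := by
  cases m with
  | zero =>
    intro _
    have h0 : ((Option.some ⁻¹' (Set.univ : Set (Option K)))ᶜ : Set K) = ∅ := by simp
    show Cardinal.mk ((Option.some ⁻¹' (Set.univ : Set (Option K)))ᶜ : Set K) < Cardinal.mk K
    rw [h0, Cardinal.mk_emptyCollection]
    exact Cardinal.mk_ne_zero K |>.bot_lt
  | succ m =>
    intro _
    have h : ({ξ : K | CIsOpen K m (cslice (Set.univ : Set (Option (CIdx K (m+1)))) ξ)}ᶜ : Set K)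
        = ∅ := by
      ext ξ
      simp only [Set.mem_compl_iff, Set.mem_setOf_eq, Set.mem_empty_iff_false, iff_false, not_not]
      exact (congrArg (CIsOpen K m) (cslice_univ (J := CIdx K m) ξ)).mpr (cisOpen_univ K m)
    rw [h, Cardinal.mk_emptyCollection]
    exact Cardinal.mk_ne_zero K |>.bot_lt

theorem some_mem_cslice_iff {K J : Type u} (U : Set (Option (K × J))) (ξ : K) (x : J) :
    some x ∈ cslice U ξ ↔ some (ξ, x) ∈ U := by
  simp [cslice]

theorem cslice_inter {K J : Type u} (U V : Set (Option (K × J))) (ξ : K) :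
    cslice (U ∩ V) ξ = cslice U ξ ∩ cslice V ξ := by
  ext z
  cases z with
  | none => simp [none_mem_cslice]
  | some x => simp [some_mem_cslice_iff]

theorem cisOpen_inter (K : Type u) [Infinite K] (m : ℕ) :
    ∀ U V : Set (Option (CIdx K m)), CIsOpen K m U → CIsOpen K m V →
      CIsOpen K m (U ∩ V) := by
  induction m with
  | zero =>
    intro U V hU hV h
    have hsub : ((Option.some ⁻¹' (U ∩ V))ᶜ : Set K) ⊆
        (Option.some ⁻¹' U)ᶜ ∪ (Option.some ⁻¹' V)ᶜ := by
      intro x hx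
      by_contra hc
      exact hx ⟨by_contra fun h1 => hc (Or.inl h1), by_contra fun h2 => hc (Or.inr h2)⟩
    refine lt_of_le_of_lt (Cardinal.mk_le_mk_of_subset hsub) ?_
    refine lt_of_le_of_lt (Cardinal.mk_union_le _ _) ?_
    exact Cardinal.add_lt_of_lt (Cardinal.aleph0_le_mk K) (hU h.1) (hV h.2)
  | succ m ih =>
    intro U V hU hV h
    have hsub : ({ξ : K | CIsOpen K m (cslice (U ∩ V) ξ)}ᶜ : Set K) ⊆
        {ξ : K | CIsOpen K m (cslice U ξ)}ᶜ ∪ {ξ : K | CIsOpen K m (cslice V ξ)}ᶜ := by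
      intro ξ hξ
      by_contra hc
      simp only [Set.mem_union, Set.mem_compl_iff, Set.mem_setOf_eq, not_not] at hc hξ
      push_neg at hc
      exact hξ ((congrArg (CIsOpen K m) (cslice_inter (J := CIdx K m) U V ξ)).mpr
        (ih _ _ hc.1 hc.2))
    refine lt_of_le_of_lt (Cardinal.mk_le_mk_of_subset hsub) ?_
    refine lt_of_le_of_lt (Cardinal.mk_union_le _ _) ?_
    exact Cardinal.add_lt_of_lt (Cardinal.aleph0_le_mk K) (hU h.1) (hV h.2)

theorem cisOpen_sUnion (K : Type u) (m : ℕ) (S : Set (Set (Option (CIdx K m))))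
    (hS : ∀ U ∈ S, CIsOpen K m U) : CIsOpen K m (⋃₀ S) := by
  by_cases h : none ∈ ⋃₀ S
  · obtain ⟨U, hUS, hU⟩ := h
    exact cisOpen_mono K m U _ (hS U hUS) (Set.subset_sUnion_of_mem hUS) (fun _ => hU)
  · exact cisOpen_of_none_not_mem _ _ _ h

/-- The space `C⁻(α, m+1)` from the paper (so `m = 0` gives `C(α)` itself);
`K` plays the role of the set of ordinals `< α` and `none` plays the role of `∞`. -/
def CTop (K : Type u) [Infinite K] (m : ℕ) : TopologicalSpace (Option (CIdx K m)) where
  IsOpen := CIsOpen K m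
  isOpen_univ := cisOpen_univ K m
  isOpen_inter := cisOpen_inter K m
  isOpen_sUnion := cisOpen_sUnion K m

instance instCTop (K : Type u) [Infinite K] (m : ℕ) : TopologicalSpace (Option (CIdx K m)) :=
  CTop K m


theorem isQuotientMap_iff_old {X Y : Type*} {f : X → Y} [TopologicalSpace X]
    [TopologicalSpace Y] :
    Topology.IsQuotientMap f ↔ Function.Surjective f ∧ ∀ s : Set Y, IsOpen s ↔ IsOpen (f ⁻¹' s) := by
  rw [Topology.isQuotientMap_iff, Topology.isCoinducing_iff]
  exact ⟨fun ⟨h1, h2⟩ => ⟨h2, fun s => (h1 s).symm⟩, fun ⟨h1, h2⟩ => ⟨fun s => (h2 s).symm, h1⟩⟩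

section Chunk1
open Topology Filter Set

namespace S16

/-- `C(ω)`. -/
abbrev Com : Type u := Option (ULift.{u} ℕ)

/-- Its topology. -/
def tCom : TopologicalSpace Com.{u} := CTop (ULift.{u} ℕ) 0

/-- The single-space class of `C(ω)`. -/
abbrev sCl : TopClass.{u} := singleClass Com.{u} tCom.{u}

theorem isCoreflective_CH (A : TopClass.{u}) : IsCoreflective (CH A) := by
  constructor
  · intro ι X t hX C hC hAC
    exact hC.1 ι X t (fun i => hX i C hC hAC)
  · intro X Y tX tY f hf hX C hC hAC
    exact hC.2 X Y tX tY f hf (hX C hC hAC)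

theorem mem_CH (A : TopClass.{u}) (X : Type u) (tX : TopologicalSpace X) (h : A X tX) :
    CH A X tX := fun _ hC hAC => hAC X tX h

theorem CH_min {A C : TopClass.{u}} (hC : IsCoreflective C)
    (hAC : ∀ Y tY, A Y tY → C Y tY) {X tX} (h : CH A X tX) : C X tX := h C hC hAC

/-- Transport of membership along a homeomorphism. -/
theorem coreflective_homeo {C : TopClass.{u}} (hC : IsCoreflective C)
    {X Y : Type u} {tX : TopologicalSpace X} {tY : TopologicalSpace Y}
    (e : @Homeomorph X Y tX tY) (h : C X tX) : C Y tY :=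
  hC.2 X Y tX tY e (@Homeomorph.isQuotientMap X Y tX tY e) h

/-- Every subset of a subsingleton is `∅` or `univ`. -/
theorem subsingleton_set_cases {α : Type*} [Subsingleton α] (s : Set α) :
    s = ∅ ∨ s = Set.univ := by
  rcases s.eq_empty_or_nonempty with h | ⟨x, hx⟩
  · exact Or.inl h
  · refine Or.inr (Set.eq_univ_of_forall fun y => ?_)
    rwa [Subsingleton.elim y x]

/-- A coreflective class with a nonempty member contains every one-point space. -/
theorem punit_mem {C : TopClass.{u}} (hC : IsCoreflective C)
    {Z : Type u} {tZ : TopologicalSpace Z} (hmem : C Z tZ) (hne : Nonempty Z)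
    (tP : TopologicalSpace PUnit.{u+1}) : C PUnit.{u+1} tP := by
  refine hC.2 Z _ tZ tP (fun _ => PUnit.unit) ?_ hmem
  rw [@isQuotientMap_iff_old _ _ _ tZ tP]
  constructor
  · intro p; exact ⟨hne.some, rfl⟩
  · intro s
    rcases subsingleton_set_cases s with rfl | rfl
    · rw [Set.preimage_empty]
      exact iff_of_true (@isOpen_empty _ tP) (@isOpen_empty _ tZ)
    · rw [Set.preimage_univ]
      exact iff_of_true (@isOpen_univ _ tP) (@isOpen_univ _ tZ)

theorem bot_of_forall_isOpen {X : Type u} {t : TopologicalSpace X}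
    (h : ∀ s : Set X, IsOpen[t] s) : t = ⊥ := by
  refine le_antisymm ?_ bot_le
  intro s _
  exact h s

theorem isOpen_bot {X : Type u} (s : Set X) : IsOpen[⊥] s := by
  letI : TopologicalSpace X := ⊥
  exact (@discreteTopology_bot X).eq_bot ▸ @isOpen_discrete X ⊥ ⟨rfl⟩ s

/-- A coreflective class with a nonempty member contains every discrete space. -/
theorem discrete_mem {C : TopClass.{u}} (hC : IsCoreflective C)
    {Z : Type u} {tZ : TopologicalSpace Z} (hmem : C Z tZ) (hne : Nonempty Z)
    (D : Type u) : C D ⊥ := by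
  have h1 : C ((_ : D) × PUnit.{u+1})
      (@instTopologicalSpaceSigma D (fun _ => PUnit) (fun _ => ⊥)) :=
    hC.1 D (fun _ => PUnit) (fun _ => ⊥) (fun _ => punit_mem hC hmem hne ⊥)
  have h2 : (@instTopologicalSpaceSigma D (fun _ => PUnit.{u+1}) (fun _ => ⊥)) = ⊥ := by
    apply bot_of_forall_isOpen
    intro s
    rw [@isOpen_sigma_iff _ _ (fun _ => ⊥)]
    intro d
    exact isOpen_bot _
  rw [h2] at h1
  refine hC.2 _ _ ⊥ ⊥ (fun p => p.1) ?_ h1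
  rw [@isQuotientMap_iff_old _ _ _ ⊥ ⊥]
  exact ⟨fun d => ⟨⟨d, PUnit.unit⟩, rfl⟩, fun s => by simp [isOpen_bot]⟩

/-- The class of discrete spaces. -/
def botClass : TopClass.{u} := fun _ tX => tX = ⊥

theorem isCoreflective_botClass : IsCoreflective botClass.{u} := by
  constructor
  · intro ι X t h
    apply bot_of_forall_isOpen
    intro s
    rw [@isOpen_sigma_iff _ _ t]
    intro i
    rw [h i]
    exact isOpen_bot _
  · intro X Y tX tY f hf h
    apply bot_of_forall_isOpen
    intro s
    rw [(@isQuotientMap_iff_old _ _ _ tX tY).mp hf |>.2 s, h]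
    exact isOpen_bot _

end S16
end Chunk1
section Chunk2
open Topology Filter Set

namespace S16

/-- Sequentially open w.r.t. an explicit topology. -/
def SeqPred {X : Type u} (tX : TopologicalSpace X) (U : Set X) : Prop :=
  ∀ x ∈ U, ∀ s : ℕ → X, Filter.Tendsto s Filter.atTop (@nhds X tX x) →
    ∀ᶠ k in Filter.atTop, s k ∈ U

/-- The class of sequential spaces. -/
def seqClass : TopClass.{u} := fun X tX => ∀ U : Set X, SeqPred tX U → IsOpen[tX] U

theorem isCoreflective_seqClass : IsCoreflective seqClass.{u} := by
  constructor
  · intro ι X t h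
    intro U hU
    rw [@isOpen_sigma_iff _ _ t]
    intro i
    apply h i
    intro x hx s hs
    have hcont : Continuous[t i, _] (Sigma.mk i) := @continuous_sigmaMk ι X t i
    have : Filter.Tendsto (fun k => Sigma.mk i (s k)) Filter.atTop
        (@nhds _ (@instTopologicalSpaceSigma ι X t) ⟨i, x⟩) :=
      ((@Continuous.tendsto _ _ (t i) _ _ hcont x).comp hs)
    exact (hU ⟨i, x⟩ hx _ this).mono (fun k hk => hk)
  · intro X Y tX tY f hf h
    intro U hU
    rw [((@isQuotientMap_iff_old _ _ _ tX tY).mp hf).2 U]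
    apply h
    intro x hx s hs
    have hcont : Continuous[tX, tY] f := by
      letI := tX; letI := tY; exact hf.continuous
    have : Filter.Tendsto (fun k => f (s k)) Filter.atTop (@nhds _ tY (f x)) :=
      (@Continuous.tendsto _ _ tX tY f hcont x).comp hs
    exact (hU (f x) hx _ this).mono (fun k hk => hk)

theorem seqClass_Com : seqClass.{u} Com.{u} tCom.{u} := by
  intro U hU
  show CIsOpen (ULift.{u} ℕ) 0 U
  intro hnone
  have hKcard : Cardinal.mk (ULift.{u} ℕ) = Cardinal.aleph0.{u} := by simp
  refine lt_of_lt_of_eq ?_ hKcard.symm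
  rw [Cardinal.mk_lt_aleph0_iff, ← Set.finite_coe_iff.symm]
  by_contra hinf
  have hinf' : ((Option.some ⁻¹' U)ᶜ : Set (ULift.{u} ℕ)).Infinite := fun hfin => hinf hfin
  obtain ⟨f, hfinj⟩ : ∃ f : ℕ → ↥((Option.some ⁻¹' U)ᶜ : Set (ULift.{u} ℕ)),
      Function.Injective f := ⟨hinf'.natEmbedding _, (hinf'.natEmbedding _).injective⟩
  set σ : ℕ → Com.{u} := fun k => Option.some ((f k) : ULift.{u} ℕ) with hσ
  have htd : Filter.Tendsto σ Filter.atTop (@nhds _ tCom.{u} none) := by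
    rw [@tendsto_nhds _ tCom]
    intro V hV hnV
    have hfin : ((Option.some ⁻¹' V)ᶜ : Set (ULift.{u} ℕ)).Finite := by
      have h2 := hV hnV
      rw [hKcard, Cardinal.mk_lt_aleph0_iff, ← Set.finite_coe_iff.symm] at h2
      exact h2
    have hfin2 : {k : ℕ | σ k ∉ V}.Finite := by
      apply Set.Finite.ofFinset ((hfin.preimage
        (f := fun k : ℕ => ((f k : ULift.{u} ℕ)))
        (Function.Injective.injOn (fun a b hab => hfinj (Subtype.coe_injective hab)))).toFinset)
      intro k
      simp only [Set.Finite.mem_toFinset, Set.mem_preimage, Set.mem_compl_iff, Set.mem_setOf_eq]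
      exact Iff.rfl
    rw [← Nat.cofinite_eq_atTop]
    exact (Filter.eventually_cofinite).mpr hfin2
  obtain ⟨k, hk⟩ := (hU none hnone σ htd).exists
  exact (f k).property hk

end S16
end Chunk2

namespace S16
open Topology Filter Set

theorem seq_of_CH {Y : Type u} {tY : TopologicalSpace Y} (h : CH sCl.{u} Y tY) :
    seqClass Y tY :=
  CH_min isCoreflective_seqClass
    (fun _Z _tZ hZ => hZ.elim fun e =>
      @coreflective_homeo seqClass.{u} isCoreflective_seqClass Com.{u} _Z tCom.{u} _tZ
        (@Homeomorph.symm _Z Com.{u} _tZ tCom.{u} e) seqClass_Com) h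

end S16
section Chunk3
open Topology Filter Set

namespace S16

/-- The prime topology associated with a filter `F` and a point `a` : all points other than
`a` are isolated, and the open neighbourhoods of `a` are the members of `F` containing `a`. -/
def primeTop {X : Type u} (F : Filter X) (a : X) : TopologicalSpace X where
  IsOpen U := a ∈ U → U ∈ F
  isOpen_univ := fun _ => F.univ_sets
  isOpen_inter := fun U V hU hV h => F.inter_sets (hU h.1) (hV h.2)
  isOpen_sUnion := fun S hS h => by
    obtain ⟨U, hUS, haU⟩ := h
    exact F.sets_of_superset (hS U hUS haU) (Set.subset_sUnion_of_mem hUS)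

theorem primeTop_isOpen_iff {X : Type u} (F : Filter X) (a : X) (U : Set X) :
    IsOpen[primeTop F a] U ↔ (a ∈ U → U ∈ F) := Iff.rfl

theorem primeTop_eq_bot {X : Type u} {F : Filter X} {a : X} (h : {a} ∈ F) :
    primeTop F a = ⊥ :=
  bot_of_forall_isOpen fun s hs => F.sets_of_superset h (Set.singleton_subset_iff.mpr hs)

/-- Every space is a quotient of the topological sum of its prime factors. -/
theorem primeFactor_quotientMap {X : Type u} (tX : TopologicalSpace X) :
    @Topology.IsQuotientMap ((_x : X) × X) X
      (@instTopologicalSpaceSigma X (fun _ => X) (fun x => primeTop (@nhds X tX x) x)) tX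
      (fun p => p.2) := by
  rw [@isQuotientMap_iff_old _ _ _
    (@instTopologicalSpaceSigma X (fun _ => X) (fun x => primeTop (@nhds X tX x) x)) tX]
  refine ⟨fun y => ⟨⟨y, y⟩, rfl⟩, fun s => ?_⟩
  rw [@isOpen_sigma_iff _ _ (fun x => primeTop (@nhds X tX x) x)]
  constructor
  · intro hs x
    rw [primeTop_isOpen_iff]
    intro hx
    letI := tX
    exact hs.mem_nhds hx
  · intro hall
    rw [@isOpen_iff_mem_nhds X tX]
    intro x hx
    exact hall x hx

/-- A coreflective class containing all the prime factors of `X` contains `X`. -/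
theorem mem_of_primeFactors {C : TopClass.{u}} (hC : IsCoreflective C)
    {X : Type u} (tX : TopologicalSpace X)
    (h : ∀ x : X, C X (primeTop (@nhds X tX x) x)) : C X tX :=
  hC.2 _ _ _ _ _ (primeFactor_quotientMap tX)
    (hC.1 X (fun _ => X) (fun x => primeTop (@nhds X tX x) x) h)

/-- The auxiliary enlargement of a class by all discrete spaces. -/
def auxCl (B : TopClass.{u}) : TopClass.{u} := CH (fun X tX => B X tX ∨ tX = ⊥)

theorem isCoreflective_auxCl (B : TopClass.{u}) : IsCoreflective (auxCl B) :=
  isCoreflective_CH _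

theorem mem_auxCl_of_mem {B : TopClass.{u}} {X tX} (h : B X tX) : auxCl B X tX :=
  mem_CH _ _ _ (Or.inl h)

theorem bot_mem_auxCl (B : TopClass.{u}) (X : Type u) : auxCl B X ⊥ :=
  mem_CH _ _ _ (Or.inr rfl)

/-- If `B` is coreflective with a nonempty member, then `auxCl B = B`. -/
theorem auxCl_sub_of_nonempty {B : TopClass.{u}} (hB : IsCoreflective B)
    {Z : Type u} {tZ : TopologicalSpace Z} (hZ : B Z tZ) (hne : Nonempty Z) :
    ∀ X tX, auxCl B X tX → B X tX := fun _X _tX h =>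
  CH_min hB (fun Y _tY hY => hY.elim id (fun hbot => hbot ▸ discrete_mem hB hZ hne Y)) h

/-- If all members of `B` are empty, then all members of `auxCl B` are discrete. -/
theorem auxCl_sub_bot_of_empty {B : TopClass.{u}}
    (hemp : ∀ Z tZ, B Z tZ → ¬Nonempty Z) :
    ∀ X tX, auxCl B X tX → tX = ⊥ := fun _X _tX h =>
  CH_min isCoreflective_botClass
    (fun Y tY hY => hY.elim
      (fun hBY => bot_of_forall_isOpen fun s => by
        have : IsEmpty Y := not_nonempty_iff.mp (hemp Y tY hBY)
        have hs : s = (∅ : Set Y) := Set.eq_empty_of_isEmpty s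
        rw [hs]; exact @isOpen_empty Y tY)
      id) h

/-- The decomposition class of a family of classes. -/
def decompCl {I : Type v} (B : I → TopClass.{u}) : TopClass.{u} :=
  fun X tX => ∃ T : I → TopologicalSpace X, (∀ i, B i X (T i)) ∧
    (∀ U : Set X, IsOpen[tX] U ↔ ∀ i, IsOpen[T i] U)

theorem isCoreflective_decompCl {I : Type v} (B : I → TopClass.{u})
    (hB : ∀ i, IsCoreflective (B i)) : IsCoreflective (decompCl B) := by
  constructor
  · intro ι X t hX
    choose T hT1 hT2 using hX
    refine ⟨fun i => @instTopologicalSpaceSigma ι X (fun k => T k i), fun i =>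
      (hB i).1 ι X (fun k => T k i) (fun k => hT1 k i), fun U => ?_⟩
    rw [@isOpen_sigma_iff _ _ t]
    constructor
    · intro h i
      rw [@isOpen_sigma_iff _ _ (fun k => T k i)]
      intro k
      exact ((hT2 k (Sigma.mk k ⁻¹' U)).mp (h k)) i
    · intro h k
      rw [hT2 k]
      intro i
      have := h i
      rw [@isOpen_sigma_iff _ _ (fun k => T k i)] at this
      exact this k
  · intro X Y tX tY f hf hX
    obtain ⟨T, hT1, hT2⟩ := hX
    refine ⟨fun i => TopologicalSpace.coinduced f (T i), fun i => ?_, fun U => ?_⟩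
    · refine (hB i).2 X Y (T i) _ f ?_ (hT1 i)
      rw [@isQuotientMap_iff_old _ _ _ (T i) (TopologicalSpace.coinduced f (T i))]
      exact ⟨((@isQuotientMap_iff_old _ _ _ tX tY).mp hf).1, fun s => isOpen_coinduced⟩
    · constructor
      · intro h i
        show IsOpen[T i] (f ⁻¹' U)
        exact (hT2 (f ⁻¹' U)).mp (by
          rw [← ((@isQuotientMap_iff_old _ _ _ tX tY).mp hf).2 U]; exact h) i
      · intro h
        rw [((@isQuotientMap_iff_old _ _ _ tX tY).mp hf).2 U, hT2]
        intro i
        exact h i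

end S16
end Chunk3
section Chunk4
open Topology Filter Set

namespace S16

/-- The topology generated by a set `D` of declared convergent sequences: a set is open iff
for each declaration `(σ, x) ∈ D` with `x ∈ U`, the sequence `σ` is eventually in `U`. -/
def SeqGen {X : Type u} (D : Set ((ℕ → X) × X)) : TopologicalSpace X where
  IsOpen U := ∀ p ∈ D, p.2 ∈ U → ∀ᶠ k in Filter.atTop, p.1 k ∈ U
  isOpen_univ := by intro p _ _; exact Filter.Eventually.of_forall (fun k => trivial)
  isOpen_inter := fun U V hU hV p hp hpx =>
    ((hU p hp hpx.1).and (hV p hp hpx.2)).mono (fun k hk => hk)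
  isOpen_sUnion := fun S hS p hp hpx => by
    obtain ⟨U, hUS, hx⟩ := hpx
    exact (hS U hUS p hp hx).mono (fun k hk => Set.mem_sUnion.mpr ⟨U, hUS, hk⟩)

theorem seqGen_isOpen_iff {X : Type u} (D : Set ((ℕ → X) × X)) (U : Set X) :
    IsOpen[SeqGen D] U ↔ ∀ p ∈ D, p.2 ∈ U → ∀ᶠ k in Filter.atTop, p.1 k ∈ U := Iff.rfl

theorem ulift_set_finite_iff {P : ℕ → Prop} :
    {k : ULift.{u} ℕ | P k.down}.Finite ↔ {n : ℕ | P n}.Finite := by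
  constructor
  · intro h
    have : {n : ℕ | P n} = ULift.down '' {k : ULift.{u} ℕ | P k.down} := by
      ext n
      exact ⟨fun hn => ⟨⟨n⟩, hn, rfl⟩, fun ⟨k, hk, hkn⟩ => hkn ▸ hk⟩
    rw [this]
    exact h.image _
  · intro h
    have : {k : ULift.{u} ℕ | P k.down} = ULift.down ⁻¹' {n : ℕ | P n} := rfl
    rw [this]
    exact h.preimage (Function.Injective.injOn (fun a b hab => ULift.ext _ _ hab))

theorem tCom_isOpen_iff (U : Set Com.{u}) :
    IsOpen[tCom.{u}] U ↔ (none ∈ U → {n : ℕ | Option.some (ULift.up n) ∉ U}.Finite) := by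
  show CIsOpen (ULift.{u} ℕ) 0 U ↔ _
  constructor
  · intro h hnone
    have h2 := h hnone
    rw [show Cardinal.mk (ULift.{u} ℕ) = Cardinal.aleph0.{u} by simp,
      Cardinal.mk_lt_aleph0_iff, ← Set.finite_coe_iff.symm] at h2
    have : ((Option.some ⁻¹' U)ᶜ : Set (ULift.{u} ℕ))
        = {k : ULift.{u} ℕ | Option.some (ULift.up k.down) ∉ U} := by
      ext k; simp
    rw [this] at h2
    exact (ulift_set_finite_iff (P := fun n => Option.some (ULift.up n) ∉ U)).mp h2
  · intro h hnone
    refine lt_of_lt_of_eq ?_ (show Cardinal.mk (ULift.{u} ℕ) = Cardinal.aleph0.{u} by simp).symm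
    rw [Cardinal.mk_lt_aleph0_iff, ← Set.finite_coe_iff.symm]
    have h2 := (ulift_set_finite_iff (P := fun n => Option.some (ULift.up n) ∉ U)).mpr (h hnone)
    have : ((Option.some ⁻¹' U)ᶜ : Set (ULift.{u} ℕ))
        = {k : ULift.{u} ℕ | Option.some (ULift.up k.down) ∉ U} := by
      ext k; simp
    rw [this]
    exact h2

theorem eventually_atTop_iff_finite {P : ℕ → Prop} :
    (∀ᶠ k in Filter.atTop, P k) ↔ {n : ℕ | ¬ P n}.Finite := by
  rw [← Nat.cofinite_eq_atTop, Filter.eventually_cofinite]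

/-- Every declared-convergence space lies in the coreflective hull of `C(ω)`. -/
theorem seqGen_mem_CH {X : Type u} (D : Set ((ℕ → X) × X)) : CH sCl.{u} X (SeqGen D) := by
  intro C hC hsub
  have hCom : C Com.{u} tCom.{u} := hsub Com.{u} tCom.{u} ⟨@Homeomorph.refl Com.{u} tCom.{u}⟩
  classical
  set ι : Type u := ↥D ⊕ X with hι
  set Fam : ι → Type u := fun j => Sum.rec (fun _ => Com.{u}) (fun _ => PUnit.{u+1}) j with hFam
  set tFam : (j : ι) → TopologicalSpace (Fam j) :=
    fun j => Sum.rec (motive := fun j => TopologicalSpace (Fam j))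
      (fun _ => tCom.{u}) (fun _ => ⊥) j with htFam
  have hmem : ∀ j, C (Fam j) (tFam j) := by
    rintro (d | x)
    · exact hCom
    · exact punit_mem hC hCom ⟨none⟩ _
  have hsum := hC.1 ι Fam tFam hmem
  set q : ((j : ι) × Fam j) → X := fun p =>
    Sum.rec (motive := fun j => Fam j → X)
      (fun d z => Option.rec (d.1.2) (fun k => d.1.1 k.down) z)
      (fun x _ => x) p.1 p.2 with hq
  refine hC.2 _ _ _ _ q ?_ hsum
  rw [@isQuotientMap_iff_old _ _ _ (@instTopologicalSpaceSigma ι Fam tFam) (SeqGen D)]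
  refine ⟨fun x => ⟨⟨Sum.inr x, PUnit.unit⟩, rfl⟩, fun s => ?_⟩
  rw [@isOpen_sigma_iff _ _ tFam, seqGen_isOpen_iff]
  constructor
  · intro h
    rintro (d | x)
    · show IsOpen[tCom.{u}] _
      rw [tCom_isOpen_iff]
      intro hnone
      rw [← eventually_atTop_iff_finite]
      exact (h d.1 d.2 hnone).mono (fun k hk => hk)
    · show IsOpen[(⊥ : TopologicalSpace PUnit.{u+1})] _
      exact isOpen_bot _
  · intro h p hp hx
    have h2 := h (Sum.inl ⟨p, hp⟩)
    rw [show tFam (Sum.inl ⟨p, hp⟩) = tCom.{u} from rfl, tCom_isOpen_iff] at h2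
    rw [eventually_atTop_iff_finite]
    exact h2 hx
  
end S16
end Chunk4
section Chunk5
open Topology Filter Set

namespace S16

/-- Factor data: a pointed subspace of a space in the coreflective hull of `C(ω)`,
whose distinguished point is not isolated in the subspace. -/
structure FB : Type (u + 1) where
  Y : Type u
  tY : TopologicalSpace Y
  hY : CH sCl.{u} Y tY
  R : Set Y
  b : Y
  hbR : b ∈ R
  noniso : ∀ V ∈ @nhds _ tY b, ¬ (V ∩ R ⊆ {b})

/-- The non-neighbourhoods of `b` within the subspace `R` (the blade index data). -/
def NO (f : FB.{u}) : Type u :=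
  {U : Set f.Y // U ⊆ f.R ∧ f.b ∈ U ∧ ∀ V ∈ @nhds _ f.tY f.b, ¬ (V ∩ f.R ⊆ U)}

instance NO.nonempty (f : FB.{u}) : Nonempty (NO f) :=
  ⟨⟨{f.b}, Set.singleton_subset_iff.mpr f.hbR, rfl, f.noniso⟩⟩

variable (fb : ℕ → FB.{u})

/-- Choice functions: one non-neighbourhood at each coordinate. -/
def Ch : Type u := (n : ℕ) → NO (fb n)

instance : Nonempty (Ch fb) := ⟨fun n => Classical.arbitrary _⟩

/-- The deleted coordinate set at position `n` for the choice `c`. -/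
def Sd (c : Ch fb) (n : ℕ) : Set (fb n).Y := (fb n).R \ (c n).val

theorem Sd_nonempty (c : Ch fb) (n : ℕ) : (Sd fb c n).Nonempty := by
  have := (c n).property.2.2 Set.univ Filter.univ_mem
  rcases Set.not_subset.mp this with ⟨y, hy1, hy2⟩
  exact ⟨y, hy1.2, hy2⟩

/-- Prefix tuples. -/
def Pre (c : Ch fb) (n : ℕ) : Type u := (m : Fin n) → ↥(Sd fb c m)

/-- A tower point: a level, a prefix and a current (doubled) ambient coordinate. -/
def Pt (c : Ch fb) : Type u := Σ n : ℕ, Pre fb c n × ((fb n).Y × Bool)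

/-- The carrier of the ambient space: the wedge point `none`, plus for each choice `c`
and each part tag `N`, the points of the `N`-th ambient tower of the blade `c`. -/
def Amb : Type u := Option (Σ c : Ch fb, ℕ × Pt fb c)

/-- Point constructor. -/
def mk (c : Ch fb) (N : ℕ) (n : ℕ) (p : Pre fb c n) (y : (fb n).Y) (e : Bool) : Amb fb :=
  some ⟨c, N, ⟨n, (p, (y, e))⟩⟩

def bladeOf : Amb fb → Option (Ch fb) := fun a => Option.map (fun q => q.1) a
def tagOf : Amb fb → ℕ := fun a => Option.rec 0 (fun q => q.2.1) a
def lvOf : Amb fb → ℕ := fun a => Option.rec 0 (fun q => q.2.2.1) a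
def boolOf : Amb fb → Bool := fun a => Option.rec false (fun q => q.2.2.2.2.2) a

/-- The `j`-th coordinate of a point (junk value `b` if absent). -/
def coordY (j : ℕ) : Amb fb → (fb j).Y := fun a =>
  Option.rec ((fb j).b)
    (fun q => if h : j < q.2.2.1 then ((q.2.2.2.1 ⟨j, h⟩ : ↥(Sd fb q.1 j)) : (fb j).Y)
      else if h2 : q.2.2.1 = j then h2 ▸ q.2.2.2.2.1 else (fb j).b) a

@[simp] theorem bladeOf_mk (c N n p y e) : bladeOf fb (mk fb c N n p y e) = some c := rfl
@[simp] theorem bladeOf_none : bladeOf fb none = none := rfl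
@[simp] theorem tagOf_mk (c N n p y e) : tagOf fb (mk fb c N n p y e) = N := rfl
@[simp] theorem lvOf_mk (c N n p y e) : lvOf fb (mk fb c N n p y e) = n := rfl
@[simp] theorem boolOf_mk (c N n p y e) : boolOf fb (mk fb c N n p y e) = e := rfl

theorem coordY_mk_lt {c N n p y e j} (h : j < n) :
    coordY fb j (mk fb c N n p y e) = ((p ⟨j, h⟩ : ↥(Sd fb c j)) : (fb j).Y) := by
  show dite _ _ _ = _
  rw [dif_pos h]

@[simp] theorem coordY_mk_self (c N n p y e) :
    coordY fb n (mk fb c N n p y e) = y := by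
  show dite _ _ _ = _
  rw [dif_neg (lt_irrefl n), dif_pos rfl]

theorem coordY_mk_gt {c N n p y e j} (h : n < j) :
    coordY fb j (mk fb c N n p y e) = (fb j).b := by
  unfold coordY mk
  dsimp only
  rw [dif_neg (by omega), dif_neg (by omega)]

/-- The set of points of the wedge `W` inside the ambient carrier. -/
def WSet : Set (Amb fb) :=
  {a | a = none ∨ ∃ c N p y, y ∈ Sd fb c N ∧ a = mk fb c N N p y true}

theorem none_mem_WSet : none ∈ WSet fb := Or.inl rfl

/-- The declared convergent sequences of the ambient space. -/
inductive Decl : (ℕ → Amb fb) → Amb fb → Prop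
  | seq (c : Ch fb) (N n : ℕ) (p : Pre fb c n) (yseq : ℕ → (fb n).Y) (eb : ℕ → Bool)
      (y : (fb n).Y) (hy : Filter.Tendsto yseq Filter.atTop (@nhds _ (fb n).tY y)) :
      Decl (fun k => mk fb c N n p (yseq k) (eb k)) (mk fb c N n p y false)
  | junc (c : Ch fb) (N n : ℕ) (hn : n < N) (p : Pre fb c n) (s : ↥(Sd fb c n)) :
      Decl (fun _ => mk fb c N (n + 1)
          (Fin.snoc (α := fun m : Fin (n+1) => ↥(Sd fb c m)) p s) ((fb (n + 1)).b) false)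
        (mk fb c N n p (s : (fb n).Y) true)
  | root (c : Ch fb) :
      Decl (fun N => mk fb c N 0 (fun m => (m.elim0 : ↥(Sd fb c m))) ((fb 0).b) false) none

/-- The ambient topology. -/
def tAmb : TopologicalSpace (Amb fb) := SeqGen {p | Decl fb p.1 p.2}

/-- The topology of the wedge `W`. -/
def tW : TopologicalSpace ↥(WSet fb) := TopologicalSpace.induced Subtype.val (tAmb fb)

theorem W_SCH : SCH sCl.{u} ↥(WSet fb) (tW fb) := by
  refine ⟨Amb fb, tAmb fb, Subtype.val, seqGen_mem_CH _, ?_⟩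
  letI := tAmb fb
  letI : TopologicalSpace ↥(WSet fb) := tW fb
  exact ⟨⟨rfl⟩, Subtype.val_injective⟩

end S16
end Chunk5
section Chunk6
open Topology Filter Set

namespace S16

variable (fb : ℕ → FB.{u})

/-- (A) W-points other than the wedge point are isolated in the ambient space. -/
theorem isolated_W (c : Ch fb) (N : ℕ) (p : Pre fb c N) (y : (fb N).Y) :
    IsOpen[tAmb fb] {mk fb c N N p y true} := by
  show IsOpen[SeqGen _] _
  rw [seqGen_isOpen_iff]
  rintro ⟨σ, x⟩ hD hx
  simp only [Set.mem_singleton_iff] at hx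
  exfalso
  cases hD with
  | seq c' N' n' p' ys eb y' hy' =>
    have := congrArg (boolOf fb) hx
    simp only [boolOf_mk] at this
    exact Bool.noConfusion this
  | junc c' N' n' hn p' s =>
    have h1 := congrArg (lvOf fb) hx
    have h2 := congrArg (tagOf fb) hx
    simp only [mk, lvOf, tagOf] at h1 h2
    omega
  | root c' => cases hx

theorem isolated_W' (w : ↥(WSet fb)) (hw : (w : Amb fb) ≠ none) :
    IsOpen[tW fb] {w} := by
  obtain ⟨c, N, p, y, hy, hw2⟩ := w.property.resolve_left hw
  refine @isOpen_induced_iff _ _ (tAmb fb) _ _ |>.mpr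
    ⟨{mk fb c N N p y true}, isolated_W fb c N p y, ?_⟩
  ext v
  simp only [Set.mem_preimage, Set.mem_singleton_iff]
  constructor
  · intro hv
    apply Subtype.val_injective
    rw [hv, hw2]
  · intro hv
    rw [hv, hw2]

/-- Core step of the forcing argument. -/
theorem core_step (O : Set (Amb fb)) (hO : IsOpen[tAmb fb] O) (c : Ch fb) (N n : ℕ)
    (p : Pre fb c n) (hmem : mk fb c N n p ((fb n).b) false ∈ O) :
    ∃ s : ↥(Sd fb c n), mk fb c N n p (s : (fb n).Y) true ∈ O := by
  have hO' := (seqGen_isOpen_iff _ O).mp hO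
  set P := {y : (fb n).Y | mk fb c N n p y false ∈ O} with hP
  have hPopen : IsOpen[(fb n).tY] P := by
    apply seq_of_CH (fb n).hY
    intro y hyP ys hys
    exact (hO' ⟨_, _⟩ (Decl.seq c N n p ys (fun _ => false) y hys) hyP).mono (fun k hk => hk)
  have hPnhds : P ∈ @nhds _ (fb n).tY (fb n).b := by
    letI := (fb n).tY
    exact hPopen.mem_nhds hmem
  rcases Set.not_subset.mp ((c n).property.2.2 P hPnhds) with ⟨y, ⟨hyP, hyR⟩, hyU⟩
  refine ⟨⟨y, hyR, hyU⟩, ?_⟩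
  have := hO' ⟨_, _⟩
    (Decl.seq c N n p (fun _ => y) (fun _ => true) y (@tendsto_const_nhds _ (fb n).tY _ _ _))
    hyP
  obtain ⟨k, hk⟩ := this.exists
  exact hk

theorem descend (O : Set (Amb fb)) (hO : IsOpen[tAmb fb] O) (c : Ch fb) (N : ℕ) :
    ∀ (k n : ℕ), n + k = N → ∀ p : Pre fb c n, mk fb c N n p ((fb n).b) false ∈ O →
      ∃ (p' : Pre fb c N) (y : (fb N).Y), y ∈ Sd fb c N ∧ mk fb c N N p' y true ∈ O := by
  intro k
  induction k with
  | zero =>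
    intro n hn p hmem
    obtain rfl : n = N := by omega
    obtain ⟨s, hs⟩ := core_step fb O hO c n n p hmem
    exact ⟨p, s, s.property, hs⟩
  | succ k ih =>
    intro n hn p hmem
    obtain ⟨s, hs⟩ := core_step fb O hO c N n p hmem
    have hjunc := (seqGen_isOpen_iff _ O).mp hO ⟨_, _⟩
      (Decl.junc c N n (by omega) p s) hs
    obtain ⟨j, hj⟩ := hjunc.exists
    exact ih (n + 1) (by omega) _ hj

/-- (C) Every ambient open set containing the wedge point contains a W-point of each blade. -/
theorem forcing (O : Set (Amb fb)) (hO : IsOpen[tAmb fb] O) (hnone : none ∈ O) (c : Ch fb) :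
    ∃ (N : ℕ) (p : Pre fb c N) (y : (fb N).Y), y ∈ Sd fb c N ∧ mk fb c N N p y true ∈ O := by
  have hroot := (seqGen_isOpen_iff _ O).mp hO ⟨_, _⟩ (Decl.root c) hnone
  obtain ⟨M, hM⟩ := hroot.exists
  have h0M : 0 + M = M := by omega
  obtain ⟨p', y, hy, hmem⟩ := descend fb O hO c M M 0 h0M _ hM
  exact ⟨M, p', y, hy, hmem⟩

end S16
end Chunk6
section Chunk7
open Topology Filter Set

namespace S16

variable (fb : ℕ → FB.{u})

theorem mk_ne_none (c : Ch fb) (N n : ℕ) (p : Pre fb c n) (y : (fb n).Y) (e : Bool) :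
    mk fb c N n p y e ≠ none := fun h => by cases h

/-- (B) The basic open sets of the ambient space: restrict blade `c₀` to parts `≥ N₀` and
to points whose `n₀`-th coordinate (whenever present) lies in `VY`. -/
def OB (c₀ : Ch fb) (n₀ N₀ : ℕ) (VY : Set (fb n₀).Y) : Set (Amb fb) :=
  {a | a ≠ none → bladeOf fb a = some c₀ →
    (N₀ ≤ tagOf fb a ∧ (n₀ ≤ lvOf fb a → coordY fb n₀ a ∈ VY))}

theorem none_mem_OB (c₀ : Ch fb) (n₀ N₀ : ℕ) (VY : Set (fb n₀).Y) :
    none ∈ OB fb c₀ n₀ N₀ VY := fun h => absurd rfl h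

theorem mem_OB_of_ne {c₀ : Ch fb} {n₀ N₀ : ℕ} {VY : Set (fb n₀).Y}
    {c N n p y e} (hc : c ≠ c₀) : mk fb c N n p y e ∈ OB fb c₀ n₀ N₀ VY := by
  intro _ hbl
  rw [bladeOf_mk] at hbl
  exact absurd (Option.some_injective _ hbl) hc

theorem mem_OB_mk_iff {c₀ : Ch fb} {n₀ N₀ : ℕ} {VY : Set (fb n₀).Y} {N n p y e} :
    mk fb c₀ N n p y e ∈ OB fb c₀ n₀ N₀ VY ↔
      (N₀ ≤ N ∧ (n₀ ≤ n → coordY fb n₀ (mk fb c₀ N n p y e) ∈ VY)) := by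
  constructor
  · intro h
    exact h (mk_ne_none fb _ _ _ _ _ _) (by rw [bladeOf_mk])
  · intro h _ _
    exact h

theorem OB_open (c₀ : Ch fb) (n₀ N₀ : ℕ) (VY : Set (fb n₀).Y)
    (hVY : IsOpen[(fb n₀).tY] VY) (hb : (fb n₀).b ∈ VY) :
    IsOpen[tAmb fb] (OB fb c₀ n₀ N₀ VY) := by
  rw [show tAmb fb = SeqGen {p | Decl fb p.1 p.2} from rfl, seqGen_isOpen_iff]
  rintro ⟨σ, x⟩ hD hx
  cases hD with
  | seq c N n p ys eb y hy =>
    by_cases hc : c = c₀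
    · subst hc
      obtain ⟨hN, hcoord⟩ := mem_OB_mk_iff fb |>.mp hx
      rcases Nat.lt_trichotomy n₀ n with hlt | heq | hgt
      · refine Filter.Eventually.of_forall fun k => (mem_OB_mk_iff fb).mpr ⟨hN, fun _ => ?_⟩
        rw [coordY_mk_lt fb hlt]
        have h2 := hcoord (le_of_lt hlt)
        rwa [coordY_mk_lt fb hlt] at h2
      · subst heq
        have hyVY : y ∈ VY := by
          have h2 := hcoord le_rfl
          rwa [coordY_mk_self] at h2
        have hev : ∀ᶠ k in Filter.atTop, ys k ∈ VY := by
          letI := (fb n₀).tY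
          exact hy (hVY.mem_nhds hyVY)
        refine hev.mono fun k hk => (mem_OB_mk_iff fb).mpr ⟨hN, fun _ => ?_⟩
        rw [coordY_mk_self]
        exact hk
      · exact Filter.Eventually.of_forall fun k =>
          (mem_OB_mk_iff fb).mpr ⟨hN, fun hle => absurd hle (by omega)⟩
    · exact Filter.Eventually.of_forall fun k => mem_OB_of_ne fb hc
  | junc c N n hn p s =>
    by_cases hc : c = c₀
    · subst hc
      obtain ⟨hN, hcoord⟩ := mem_OB_mk_iff fb |>.mp hx
      refine Filter.Eventually.of_forall fun k => (mem_OB_mk_iff fb).mpr ⟨hN, fun hle => ?_⟩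
      rcases Nat.lt_trichotomy n₀ (n + 1) with hlt | heq | hgt
      · have hle' : n₀ ≤ n := by omega
        rcases lt_or_eq_of_le hle' with hlt' | heq'
        · erw [coordY_mk_lt fb hlt]
          have hsn : (Fin.snoc (α := fun m : Fin (n+1) => ↥(Sd fb c m)) p s) ⟨n₀, hlt⟩
              = p ⟨n₀, hlt'⟩ :=
            @Fin.snoc_castSucc n (fun m : Fin (n+1) => ↥(Sd fb c m)) s p ⟨n₀, hlt'⟩
          rw [hsn]
          have h2 := hcoord hle'
          rwa [coordY_mk_lt fb hlt'] at h2
        · subst heq'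
          erw [coordY_mk_lt fb hlt]
          have hsn : (Fin.snoc (α := fun m : Fin (n₀+1) => ↥(Sd fb c m)) p s) ⟨n₀, hlt⟩ = s :=
            @Fin.snoc_last n₀ (fun m : Fin (n₀+1) => ↥(Sd fb c m)) s p
          rw [hsn]
          have h2 := hcoord le_rfl
          rwa [coordY_mk_self] at h2
      · subst heq
        erw [coordY_mk_self]
        exact hb
      · omega
    · exact Filter.Eventually.of_forall fun k => mem_OB_of_ne fb hc
  | root c =>
    by_cases hc : c = c₀
    · subst hc
      refine (Filter.eventually_ge_atTop N₀).mono fun N hN =>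
        (mem_OB_mk_iff fb).mpr ⟨hN, fun hle => ?_⟩
      obtain rfl : n₀ = 0 := by omega
      erw [coordY_mk_self]
      exact hb
    · exact Filter.Eventually.of_forall fun k => mem_OB_of_ne fb hc

end S16
end Chunk7
section Chunk8
open Topology Filter Set
open scoped Classical

namespace S16

/-- The underlying set of the prime-factor target space of a factor datum. -/
abbrev QSp (f : FB.{u}) : Type u := ↥f.R

def bpt (f : FB.{u}) : QSp f := ⟨f.b, f.hbR⟩

/-- The trace filter. -/
def Ftr (f : FB.{u}) : Filter (QSp f) := Filter.comap Subtype.val (@nhds _ f.tY f.b)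

/-- The target prime space topology. -/
def tQ (f : FB.{u}) : TopologicalSpace (QSp f) := primeTop (Ftr f) (bpt f)

theorem not_mem_Ftr_iff (f : FB.{u}) (s : Set (QSp f)) :
    s ∉ Ftr f ↔ ∀ V ∈ @nhds _ f.tY f.b, ¬ (V ∩ f.R ⊆ Subtype.val '' s) := by
  unfold Ftr
  rw [Filter.mem_comap]
  constructor
  · intro hns V hV hsub
    refine hns ⟨V, hV, ?_⟩
    intro x hx
    obtain ⟨x', hx', hxx⟩ := hsub ⟨hx, x.property⟩
    rwa [← Subtype.val_injective hxx]
  · rintro hall ⟨V, hV, hsub⟩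
    refine hall V hV ?_
    rintro y ⟨hyV, hyR⟩
    exact ⟨⟨y, hyR⟩, hsub hyV, rfl⟩

theorem tQ_ne_bot (f : FB.{u}) : tQ f ≠ ⊥ := by
  intro hcon
  have hop : IsOpen[tQ f] {bpt f} := by rw [hcon]; exact isOpen_bot _
  have hmem : ({bpt f} : Set (QSp f)) ∈ Ftr f := hop rfl
  unfold Ftr at hmem
  rw [Filter.mem_comap] at hmem
  obtain ⟨V, hV, hsub⟩ := hmem
  refine f.noniso V hV ?_
  rintro y ⟨hyV, hyR⟩
  have : (⟨y, hyR⟩ : QSp f) ∈ Subtype.val ⁻¹' V := hyV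
  have := hsub this
  simp only [Set.mem_singleton_iff] at this
  exact congrArg Subtype.val this

/-- A non-open set of the target space containing the base point yields a blade index. -/
noncomputable def mkUd (f : FB.{u}) (s : Set (QSp f)) (hb : bpt f ∈ s) (hs : s ∉ Ftr f) :
    NO f :=
  ⟨Subtype.val '' s, by rintro y ⟨x, _, rfl⟩; exact x.property, ⟨bpt f, hb, rfl⟩,
    (not_mem_Ftr_iff f s).mp hs⟩

@[simp] theorem mkUd_val (f : FB.{u}) (s hb hs) : (mkUd f s hb hs).val = Subtype.val '' s := rfl

variable (fb : ℕ → FB.{u})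

/-- The complement of the points of blade `c₀`. -/
def Ec (c₀ : Ch fb) : Set ↥(WSet fb) := {w | bladeOf fb ↑w ≠ some c₀}

theorem none_mem_Ec (c₀ : Ch fb) : (⟨none, none_mem_WSet fb⟩ : ↥(WSet fb)) ∈ Ec fb c₀ :=
  fun h => by cases h

/-- Structure of W-points on a given blade. -/
theorem Wpt_structure (w : ↥(WSet fb)) (c₀ : Ch fb) (hbl : bladeOf fb ↑w = some c₀) :
    ∃ (N : ℕ) (p : Pre fb c₀ N) (y : (fb N).Y), y ∈ Sd fb c₀ N ∧
      (w : Amb fb) = mk fb c₀ N N p y true := by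
  rcases w.property with hnone | ⟨c, N, p, y, hy, heq⟩
  · rw [hnone] at hbl; cases hbl
  · rw [heq, bladeOf_mk] at hbl
    obtain rfl : c = c₀ := Option.some_injective _ hbl
    exact ⟨N, p, y, hy, heq⟩

theorem coordY_mem_Sd (c : Ch fb) (n₀ N : ℕ) (p : Pre fb c N) (y : (fb N).Y)
    (hy : y ∈ Sd fb c N) (h : n₀ ≤ N) :
    coordY fb n₀ (mk fb c N N p y true) ∈ Sd fb c n₀ := by
  rcases lt_or_eq_of_le h with hlt | heq
  · rw [coordY_mk_lt fb hlt]
    exact (p ⟨n₀, hlt⟩).property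
  · subst heq
    rw [coordY_mk_self]
    exact hy

/-- The witness map towards the target prime space at coordinate `n₀`, using blade `c₀`. -/
noncomputable def gw (c₀ : Ch fb) (n₀ : ℕ) (w : ↥(WSet fb)) : QSp (fb n₀) :=
  if h : bladeOf fb ↑w = some c₀ ∧ coordY fb n₀ ↑w ∈ Sd fb c₀ n₀ then
    ⟨coordY fb n₀ ↑w, h.2.1⟩
  else if bladeOf fb ↑w = some c₀ then
    ⟨(Sd_nonempty fb c₀ n₀).choose, (Sd_nonempty fb c₀ n₀).choose_spec.1⟩
  else bpt (fb n₀)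

theorem gw_val_mem_Sd_of_blade (c₀ : Ch fb) (n₀ : ℕ) (w : ↥(WSet fb))
    (hbl : bladeOf fb ↑w = some c₀) : (gw fb c₀ n₀ w : (fb n₀).Y) ∈ Sd fb c₀ n₀ := by
  unfold gw
  by_cases h : bladeOf fb ↑w = some c₀ ∧ coordY fb n₀ ↑w ∈ Sd fb c₀ n₀
  · rw [dif_pos h]; exact h.2
  · rw [dif_neg h, if_pos hbl]; exact (Sd_nonempty fb c₀ n₀).choose_spec

theorem gw_of_not_blade (c₀ : Ch fb) (n₀ : ℕ) (w : ↥(WSet fb))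
    (hbl : ¬ bladeOf fb ↑w = some c₀) : gw fb c₀ n₀ w = bpt (fb n₀) := by
  unfold gw
  rw [dif_neg (fun hc => hbl hc.1), if_neg hbl]

/-- Computation of `gw⁻¹ s` for a non-neighbourhood `s` matching the blade's choice. -/
theorem gw_preimage_eq (c₀ : Ch fb) (n₀ : ℕ) (s : Set (QSp (fb n₀)))
    (hb : bpt (fb n₀) ∈ s) (hUs : (c₀ n₀).val = Subtype.val '' s) :
    gw fb c₀ n₀ ⁻¹' s = Ec fb c₀ := by
  ext w
  simp only [Set.mem_preimage, Ec, Set.mem_setOf_eq]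
  constructor
  · intro hws hbl
    have hSd := gw_val_mem_Sd_of_blade fb c₀ n₀ w hbl
    have : (gw fb c₀ n₀ w : (fb n₀).Y) ∈ Subtype.val '' s := ⟨_, hws, rfl⟩
    rw [← hUs] at this
    exact hSd.2 this
  · intro hbl
    rw [gw_of_not_blade fb c₀ n₀ w hbl]
    exact hb

/-- Openness of a set of W-points containing the trace of an ambient open set around the
wedge point, w.r.t. any topology refining `tW` in which non-wedge points are isolated. -/
theorem T_open_of_trace (T : TopologicalSpace ↥(WSet fb))
    (hfine : ∀ U : Set ↥(WSet fb), IsOpen[tW fb] U → IsOpen[T] U)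
    (A : Set ↥(WSet fb)) (O : Set (Amb fb)) (hO : IsOpen[tAmb fb] O) (hnoneO : none ∈ O)
    (hsub : ∀ w : ↥(WSet fb), (w : Amb fb) ∈ O → w ∈ A) : IsOpen[T] A := by
  letI := T
  have h1 : IsOpen[T] (Subtype.val ⁻¹' O) := by
    apply hfine
    exact @isOpen_induced_iff _ _ (tAmb fb) _ _ |>.mpr ⟨O, hO, rfl⟩
  have h2 : IsOpen[T] (⋃ w ∈ {w : ↥(WSet fb) | w ∈ A ∧ (w : Amb fb) ≠ none}, {w}) := by
    apply isOpen_biUnion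
    intro w hw
    exact hfine _ (isolated_W' fb w hw.2)
  have hA : A = (Subtype.val ⁻¹' O) ∪
      (⋃ w ∈ {w : ↥(WSet fb) | w ∈ A ∧ (w : Amb fb) ≠ none}, {w}) := by
    apply Set.Subset.antisymm
    · intro w hwA
      by_cases hn : (w : Amb fb) = none
      · left
        show (w : Amb fb) ∈ O
        rw [hn]
        exact hnoneO
      · right
        exact Set.mem_biUnion ⟨hwA, hn⟩ rfl
    · intro w hw
      rcases hw with hw | hw
      · exact hsub w hw
      · simp only [Set.mem_iUnion, Set.mem_singleton_iff] at hw
        obtain ⟨v, hv, rfl⟩ := hw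
        exact hv.1
  rw [hA]
  exact h1.union h2

theorem T_open_of_no_none (T : TopologicalSpace ↥(WSet fb))
    (hfine : ∀ U : Set ↥(WSet fb), IsOpen[tW fb] U → IsOpen[T] U)
    (A : Set ↥(WSet fb)) (h : ∀ w ∈ A, (w : Amb fb) ≠ none) : IsOpen[T] A := by
  letI := T
  have hA : A = ⋃ w ∈ A, ({w} : Set ↥(WSet fb)) := by
    ext v
    simp only [Set.mem_iUnion, Set.mem_singleton_iff]
    exact ⟨fun hv => ⟨v, hv, rfl⟩, fun ⟨v', hv', he⟩ => he ▸ hv'⟩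
  rw [hA]
  exact isOpen_biUnion (fun w hw => hfine _ (isolated_W' fb w (h w hw)))

/-- Continuity of the witness maps. -/
theorem gw_preimage_open (c₀ : Ch fb) (n₀ : ℕ) (T : TopologicalSpace ↥(WSet fb))
    (hfine : ∀ U : Set ↥(WSet fb), IsOpen[tW fb] U → IsOpen[T] U)
    (s : Set (QSp (fb n₀))) (hs : IsOpen[tQ (fb n₀)] s) :
    IsOpen[T] (gw fb c₀ n₀ ⁻¹' s) := by
  by_cases hb : bpt (fb n₀) ∈ s
  · have hsF : s ∈ Ftr (fb n₀) := hs hb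
    obtain ⟨V, hV, hVs⟩ := Filter.mem_comap.mp
      (show s ∈ Filter.comap (Subtype.val) (@nhds _ (fb n₀).tY (fb n₀).b) from hsF)
    obtain ⟨VY, hVYsub, hVYopen, hbVY⟩ := (@mem_nhds_iff _ (fb n₀).tY).mp hV
    refine T_open_of_trace fb T hfine _ (OB fb c₀ n₀ n₀ VY)
      (OB_open fb c₀ n₀ n₀ VY hVYopen hbVY) (none_mem_OB fb c₀ n₀ n₀ VY) ?_
    intro w hwO
    show gw fb c₀ n₀ w ∈ s
    by_cases hbl : bladeOf fb ↑w = some c₀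
    · obtain ⟨N, p, y, hy, heq⟩ := Wpt_structure fb w c₀ hbl
      have hOB := hwO (by rw [heq]; exact mk_ne_none fb _ _ _ _ _ _) hbl
      have hn₀N : n₀ ≤ N := by
        have := hOB.1
        rw [heq, tagOf_mk] at this
        exact this
      have hcoordSd : coordY fb n₀ ↑w ∈ Sd fb c₀ n₀ := by
        rw [heq]
        exact coordY_mem_Sd fb c₀ n₀ N p y hy hn₀N
      have hcoordVY : coordY fb n₀ ↑w ∈ VY := by
        refine hOB.2 ?_
        rw [heq, lvOf_mk]
        exact hn₀N
      have : gw fb c₀ n₀ w = ⟨coordY fb n₀ ↑w, hcoordSd.1⟩ := by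
        unfold gw
        rw [dif_pos ⟨hbl, hcoordSd⟩]
      rw [this]
      apply hVs
      show coordY fb n₀ ↑w ∈ V
      exact hVYsub hcoordVY
    · rw [gw_of_not_blade fb c₀ n₀ w hbl]
      exact hb
  · refine T_open_of_no_none fb T hfine _ ?_
    intro w hws hn
    have hbl : ¬ bladeOf fb ↑w = some c₀ := by
      rw [hn]
      exact fun h => by cases h
    rw [Set.mem_preimage, gw_of_not_blade fb c₀ n₀ w hbl] at hws
    exact hb hws

end S16
end Chunk8
section Chunk9
open Topology Filter Set

namespace S16

theorem union_sub_decomp {I : Type v} (𝒜 : I → TopClass.{u}) :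
    ∀ Y tY, (∃ i, 𝒜 i Y tY) → decompCl (fun i => auxCl (𝒜 i)) Y tY := by
  rintro Y tY ⟨i, hi⟩
  classical
  refine ⟨fun j => if _h : j = i then tY else ⊥, fun j => ?_, fun U => ?_⟩
  · by_cases h : j = i
    · subst h
      dsimp only
      rw [dif_pos rfl]
      exact mem_auxCl_of_mem hi
    · dsimp only
      rw [dif_neg h]
      exact bot_mem_auxCl _ _
  · constructor
    · intro hU j
      by_cases h : j = i
      · subst h
        beta_reduce
        rw [dif_pos rfl]
        exact hU
      · beta_reduce
        rw [dif_neg h]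
        exact isOpen_bot U
    · intro hall
      have h4 := hall i
      beta_reduce at h4
      rwa [dif_pos rfl] at h4

/-- The dummy factor datum built from `C(ω)`. -/
noncomputable def dummyFB : FB.{u} where
  Y := Com.{u}
  tY := tCom.{u}
  hY := mem_CH _ _ _ ⟨@Homeomorph.refl Com.{u} tCom.{u}⟩
  R := Set.univ
  b := none
  hbR := trivial
  noniso := by
    intro V hV hsub
    obtain ⟨U', hU'sub, hU'open, hnU'⟩ := (@mem_nhds_iff _ tCom.{u}).mp hV
    rw [tCom_isOpen_iff] at hU'open
    obtain ⟨n, hn⟩ := ((hU'open hnU').infinite_compl).nonempty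
    have h1 : Option.some (ULift.up n) ∈ V := hU'sub (not_not.mp hn)
    have h2 := hsub ⟨h1, trivial⟩
    cases h2

/-- Extraction of a bad prime factor datum from a bad subsequential space. -/
theorem exists_badFB (B : TopClass.{u}) (hB : IsCoreflective B)
    (X : Type u) (tX : TopologicalSpace X) (hSW : SCH sCl.{u} X tX) (hnA : ¬ B X tX) :
    ∃ f : FB.{u}, ¬ auxCl B (QSp f) (tQ f) := by
  classical
  by_cases hne : ∃ Z : Type u, ∃ tZ : TopologicalSpace Z, B Z tZ ∧ Nonempty Z
  · obtain ⟨Z, tZ, hZmem, hZne⟩ := hne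
    have hAeq := auxCl_sub_of_nonempty hB hZmem hZne
    obtain ⟨Y, tY, f, hYCH, hemb⟩ := hSW
    letI := tY
    letI := tX
    have hhom : X ≃ₜ Set.range f := hemb.toHomeomorph
    have hnAsub : ¬ auxCl B ↥(Set.range f) instTopologicalSpaceSubtype := by
      intro hmem
      exact hnA (hAeq _ _ (coreflective_homeo (isCoreflective_auxCl B) hhom.symm hmem))
    have hnall : ¬ ∀ x : ↥(Set.range f), auxCl B ↥(Set.range f)
        (primeTop (@nhds _ instTopologicalSpaceSubtype x) x) := fun hall =>
      hnAsub (mem_of_primeFactors (isCoreflective_auxCl B) _ hall)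
    push_neg at hnall
    obtain ⟨x, hx⟩ := hnall
    have hnhds : @nhds _ (instTopologicalSpaceSubtype) x
        = Filter.comap Subtype.val (@nhds _ tY ↑x) := nhds_induced _ _
    have hni : ∀ V ∈ @nhds _ tY (↑x : Y), ¬ (V ∩ Set.range f ⊆ {(↑x : Y)}) := by
      intro V hV hsub
      apply hx
      have hsing : ({x} : Set ↥(Set.range f)) ∈ @nhds _ instTopologicalSpaceSubtype x := by
        rw [hnhds, Filter.mem_comap]
        refine ⟨V, hV, ?_⟩
        intro z hz
        have h3 := hsub ⟨hz, z.property⟩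
        exact Subtype.val_injective h3
      rw [primeTop_eq_bot hsing]
      exact bot_mem_auxCl B _
    refine ⟨⟨Y, tY, hYCH, Set.range f, ↑x, x.property, hni⟩, ?_⟩
    intro hmem
    apply hx
    rw [hnhds]
    exact hmem
  · have hemp : ∀ Z tZ, B Z tZ → ¬ Nonempty Z := fun Z tZ hZ hn => hne ⟨Z, tZ, hZ, hn⟩
    exact ⟨dummyFB, fun hmem =>
      tQ_ne_bot dummyFB (auxCl_sub_bot_of_empty hemp _ _ hmem)⟩

/-- The recovery of the target prime space from a successful class. -/
theorem recovery (fb : ℕ → FB.{u}) (n₀ : ℕ) (T : TopologicalSpace ↥(WSet fb))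
    (hfine : ∀ U : Set ↥(WSet fb), IsOpen[tW fb] U → IsOpen[T] U)
    (B : TopClass.{u}) (hB : IsCoreflective B)
    (hTW : B ↥(WSet fb) T) (hbot : ∀ D : Type u, B D ⊥)
    (cw : NO (fb n₀) → Ch fb) (hcw1 : ∀ Ud, (cw Ud) n₀ = Ud)
    (hcw2 : ∀ Ud, ¬ IsOpen[T] (Ec fb (cw Ud))) :
    B (QSp (fb n₀)) (tQ (fb n₀)) := by
  classical
  set ι : Type u := NO (fb n₀) ⊕ QSp (fb n₀) with hι
  set Fam : ι → Type u :=
    fun j => Sum.rec (fun _ => ↥(WSet fb)) (fun _ => PUnit.{u+1}) j with hFam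
  set tFam : (j : ι) → TopologicalSpace (Fam j) :=
    fun j => Sum.rec (motive := fun j => TopologicalSpace (Fam j))
      (fun _ => T) (fun _ => ⊥) j with htFam
  have hmem : ∀ j, B (Fam j) (tFam j) := by
    rintro (Ud | r)
    · exact hTW
    · exact hbot _
  have hsum := hB.1 ι Fam tFam hmem
  set q : ((j : ι) × Fam j) → QSp (fb n₀) := fun pr =>
    Sum.rec (motive := fun j => Fam j → QSp (fb n₀))
      (fun Ud w => gw fb (cw Ud) n₀ w) (fun r _ => r) pr.1 pr.2 with hq
  refine hB.2 _ _ _ _ q ?_ hsum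
  rw [@isQuotientMap_iff_old _ _ _ (@instTopologicalSpaceSigma ι Fam tFam) (tQ (fb n₀))]
  refine ⟨fun r => ⟨⟨Sum.inr r, PUnit.unit⟩, rfl⟩, fun s => ?_⟩
  rw [@isOpen_sigma_iff _ _ tFam]
  constructor
  · intro hs
    rintro (Ud | r)
    · show IsOpen[T] _
      exact gw_preimage_open fb (cw Ud) n₀ T hfine s hs
    · show IsOpen[(⊥ : TopologicalSpace PUnit.{u+1})] _
      exact isOpen_bot _
  · intro hall
    intro hbpt
    by_contra hsF
    set Ud : NO (fb n₀) := mkUd (fb n₀) s hbpt hsF with hUd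
    have h1 := hall (Sum.inl Ud)
    have h2 : (Sigma.mk (Sum.inl Ud) ⁻¹' (q ⁻¹' s)) = gw fb (cw Ud) n₀ ⁻¹' s := rfl
    rw [h2, gw_preimage_eq fb (cw Ud) n₀ s hbpt (by rw [hcw1 Ud, mkUd_val])] at h1
    exact hcw2 Ud h1

end S16
end Chunk9

section MainProof
open Topology Filter Set

/-- let `I` be countable (`|I| ≤ ℵ₀`) and each `𝒜 i` coreflective.  If the class
of subsequential spaces `SCH {C(ω)}` is contained in `CH (⋃ i, 𝒜 i)`, then it is contained in
some `𝒜 i₀`.  Here `C(ω)`, the convergent sequence, is realized as `Option (ULift ℕ)` with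
the topology `CTop (ULift ℕ) 0` (all points of `ℕ` isolated, neighbourhoods of `∞ = none`
cofinite). -/
theorem stmt16 {I : Type v} [Countable I] (𝒜 : I → TopClass.{u})
    (h𝒜 : ∀ i, IsCoreflective (𝒜 i))
    (h : ∀ (X : Type u) (tX : TopologicalSpace X),
      SCH (singleClass (Option (ULift.{u} ℕ)) (CTop (ULift.{u} ℕ) 0)) X tX →
        CH (fun Y tY => ∃ i, 𝒜 i Y tY) X tX) :
    ∃ i₀ : I, ∀ (X : Type u) (tX : TopologicalSpace X),
      SCH (singleClass (Option (ULift.{u} ℕ)) (CTop (ULift.{u} ℕ) 0)) X tX → 𝒜 i₀ X tX := by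

  classical
  by_contra hcon
  push_neg at hcon
  obtain ⟨pos, hpos⟩ := Countable.exists_injective_nat I
  have hbadex : ∀ i, ∃ f : S16.FB.{u}, ¬ S16.auxCl (𝒜 i) (S16.QSp f) (S16.tQ f) := by
    intro i
    obtain ⟨X, tX, hSW, hnA⟩ := hcon i
    exact S16.exists_badFB (𝒜 i) (h𝒜 i) X tX hSW hnA
  choose BadFB hBadFB using hbadex
  set fb : ℕ → S16.FB.{u} := fun n =>
    if hn : ∃ i, pos i = n then BadFB hn.choose else S16.dummyFB with hfbdef
  have hfb : ∀ i, fb (pos i) = BadFB i := by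
    intro i
    have hex : ∃ i', pos i' = pos i := ⟨i, rfl⟩
    simp only [hfbdef, dif_pos hex]
    congr 1
    exact hpos hex.choose_spec
  have hWS := S16.W_SCH fb
  have hWCH := h _ _ hWS
  have hdec : S16.decompCl (fun i => S16.auxCl (𝒜 i)) ↥(S16.WSet fb) (S16.tW fb) :=
    S16.CH_min (S16.isCoreflective_decompCl _ (fun i => S16.isCoreflective_auxCl _))
      (S16.union_sub_decomp 𝒜) hWCH
  obtain ⟨T, hT1, hT2⟩ := hdec
  have hfine : ∀ i (U : Set ↥(S16.WSet fb)), IsOpen[S16.tW fb] U → IsOpen[T i] U :=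
    fun i U hU => (hT2 U).mp hU i
  by_cases hsucc : ∃ i₀, ∀ Ud : S16.NO (fb (pos i₀)), ∃ c₀ : S16.Ch fb,
      c₀ (pos i₀) = Ud ∧ ¬ IsOpen[T i₀] (S16.Ec fb c₀)
  · obtain ⟨i₀, hi₀⟩ := hsucc
    choose cw hcw1 hcw2 using hi₀
    have hrec := S16.recovery fb (pos i₀) (T i₀) (hfine i₀) (S16.auxCl (𝒜 i₀))
      (S16.isCoreflective_auxCl _) (hT1 i₀) (fun D => S16.bot_mem_auxCl _ D) cw hcw1 hcw2
    rw [hfb i₀] at hrec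
    exact hBadFB i₀ hrec
  · push_neg at hsucc
    choose Ud hUd using hsucc
    set cs : S16.Ch fb := fun n =>
      if hn : ∃ i, pos i = n then hn.choose_spec ▸ Ud hn.choose
      else Classical.arbitrary _ with hcsdef
    have hcs : ∀ i, cs (pos i) = Ud i := by
      intro i
      have hex : ∃ i', pos i' = pos i := ⟨i, rfl⟩
      simp only [hcsdef, dif_pos hex]
      have key : ∀ (i' : I) (e : pos i' = pos i), i' = i →
          (e ▸ Ud i' : S16.NO (fb (pos i))) = Ud i := by
        intro i' e hi'
        subst hi'
        rfl
      exact key hex.choose hex.choose_spec (hpos hex.choose_spec)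
    have hEopen : ∀ i, IsOpen[T i] (S16.Ec fb cs) := fun i => hUd i cs (hcs i)
    have hWopen : IsOpen[S16.tW fb] (S16.Ec fb cs) := (hT2 _).mpr hEopen
    obtain ⟨O, hOopen, hOeq⟩ :=
      (@isOpen_induced_iff _ _ (S16.tAmb fb) _ _).mp hWopen
    have hnoneO : none ∈ O := by
      have h5 : (⟨none, S16.none_mem_WSet fb⟩ : ↥(S16.WSet fb)) ∈ Subtype.val ⁻¹' O := by
        rw [hOeq]
        exact S16.none_mem_Ec fb cs
      exact h5
    obtain ⟨N, p, y, hy, hmem⟩ := S16.forcing fb O hOopen hnoneO cs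
    have hWpt : S16.mk fb cs N N p y true ∈ S16.WSet fb := Or.inr ⟨cs, N, p, y, hy, rfl⟩
    have h6 : (⟨_, hWpt⟩ : ↥(S16.WSet fb)) ∈ Subtype.val ⁻¹' O := hmem
    rw [hOeq] at h6
    exact h6 (S16.bladeOf_mk fb cs N N p y true)


end MainProof
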